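/- arXiv:2205.03380 — 3 statements merged into one kernel-verified Lean document; each statement's English description precedes it below -/
import Mathlib

section
/- Let A ∈ ℝ^{I1×I2×I3} be a third-order real tensor and let r1, r2 be positive integers. There exist a matrix X ∈ ℝ^{I1×r1}, matrices Y_{i2} ∈ ℝ^{r1×r2} for each i2 ∈ {1,…,I2}, and a matrix Z ∈ ℝ^{r2×I3} such that A(i1,i2,i3) = ∑_{p=1}^{r1} ∑_{q=1}^{r2} X(i1,p) · Y_{i2}(p,q) · Z(q,i3) for all indices (i1,i2,i3) if and only if rank(A_{(1)}) ≤ r1 and rank(A_{(3)}) ≤ r2. -/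
open Matrix Submodule

/-- If a matrix has rank ≤ r, it factors as `M = X * B` where `B`'s rows lie in the
row space of `M`, i.e. `B = W * M`. -/
lemma exists_rank_factorization {m n : Type*} [Fintype m] [Fintype n]
    [DecidableEq m] [DecidableEq n] {r : ℕ} (M : Matrix m n ℝ)
    (h : M.rank ≤ r) :
    ∃ (X : Matrix m (Fin r) ℝ) (B : Matrix (Fin r) n ℝ)
      (W : Matrix (Fin r) m ℝ), M = X * B ∧ B = W * M := by
  classical
  set S : Submodule ℝ (n → ℝ) := Submodule.span ℝ (Set.range fun i => M i) with hS
  have hdim : Module.finrank ℝ S ≤ r := by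
    have : M.rank = Module.finrank ℝ S := by
      rw [← Matrix.rank_transpose, Matrix.rank_eq_finrank_span_cols]; rfl
    omega
  have : Module.Finite ℝ S := FiniteDimensional.finiteDimensional_submodule S
  let bb := Module.finBasis ℝ S
  -- padded spanning family of size r
  let v : Fin r → (n → ℝ) := fun p =>
    if hp : (p : ℕ) < Module.finrank ℝ S then (bb ⟨p, hp⟩ : n → ℝ) else 0
  have hvS : ∀ p, v p ∈ S := by
    intro p
    by_cases hp : (p : ℕ) < Module.finrank ℝ S
    · simp only [v, dif_pos hp]; exact (bb ⟨p, hp⟩).2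
    · simp [v, dif_neg hp]
  have hspan : S ≤ Submodule.span ℝ (Set.range v) := by
    intro x hx
    have hx' : (⟨x, hx⟩ : S) ∈ Submodule.span ℝ (Set.range bb) := by
      rw [bb.span_eq]; trivial
    rcases (mem_span_range_iff_exists_fun ℝ).1 hx' with ⟨c, hc⟩
    have : (∑ i, c i • (bb i : n → ℝ)) = x := by
      have := congrArg (Subtype.val) hc
      simpa using this
    rw [← this]
    apply Submodule.sum_mem
    intro i _
    apply Submodule.smul_mem
    apply Submodule.subset_span
    refine ⟨⟨i, i.2.trans_le hdim⟩, ?_⟩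
    simp [v, i.2]
  -- rows of M in span of v
  have hrow : ∀ i, ∃ c : Fin r → ℝ, (∑ p, c p • v p) = M i := by
    intro i
    have : M i ∈ Submodule.span ℝ (Set.range v) :=
      hspan (Submodule.subset_span ⟨i, rfl⟩)
    exact (mem_span_range_iff_exists_fun ℝ).1 this
  have hvrow : ∀ p, ∃ w : m → ℝ, (∑ i, w i • M i) = v p := by
    intro p
    exact (mem_span_range_iff_exists_fun ℝ).1 (hvS p)
  choose X hX using hrow
  choose W hW using hvrow
  refine ⟨Matrix.of X, Matrix.of v, Matrix.of W, ?_, ?_⟩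
  · ext i j
    have := congrFun (hX i) j
    simp only [Finset.sum_apply, Pi.smul_apply, smul_eq_mul] at this
    simpa [Matrix.mul_apply] using this.symm
  · ext p j
    have := congrFun (hW p) j
    simp only [Finset.sum_apply, Pi.smul_apply, smul_eq_mul] at this
    simpa [Matrix.mul_apply] using this.symm

/-- A third-order tensor `A ∈ ℝ^{I1×I2×I3}` admits a mode-2 tensor train factorization
`A(i1,i2,i3) = ∑_{p,q} X(i1,p) · Y_{i2}(p,q) · Z(q,i3)` with ranks `(r1, r2)` if and only if
the mode-1 unfolding has rank at most `r1` and the mode-3 unfolding has rank at most `r2`. -/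
theorem mode2_TT_factorization_iff_rank {I1 I2 I3 r1 r2 : ℕ}
    (hr1 : 0 < r1) (hr2 : 0 < r2)
    (A : Fin I1 → Fin I2 → Fin I3 → ℝ) :
    (∃ (X : Matrix (Fin I1) (Fin r1) ℝ) (Y : Fin I2 → Matrix (Fin r1) (Fin r2) ℝ)
        (Z : Matrix (Fin r2) (Fin I3) ℝ),
        ∀ i1 i2 i3, A i1 i2 i3 = ∑ p, ∑ q, X i1 p * Y i2 p q * Z q i3) ↔
      (Matrix.rank (Matrix.of fun (i1 : Fin I1) (jk : Fin I2 × Fin I3) => A i1 jk.1 jk.2) ≤ r1 ∧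
       Matrix.rank (Matrix.of fun (i3 : Fin I3) (jk : Fin I1 × Fin I2) => A jk.1 jk.2 i3) ≤ r2) := by
  constructor
  · rintro ⟨X, Y, Z, hA⟩
    constructor
    · have heq : (Matrix.of fun (i1 : Fin I1) (jk : Fin I2 × Fin I3) => A i1 jk.1 jk.2) =
          X * Matrix.of (fun p (jk : Fin I2 × Fin I3) => ∑ q, Y jk.1 p q * Z q jk.2) := by
        ext i1 jk
        simp only [Matrix.of_apply, Matrix.mul_apply, hA, Finset.mul_sum]
        congr 1; ext p; congr 1; ext q; ring
      rw [heq]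
      exact (Matrix.rank_mul_le_left _ _).trans (Matrix.rank_le_card_width X |>.trans (by simp))
    · have heq : (Matrix.of fun (i3 : Fin I3) (jk : Fin I1 × Fin I2) => A jk.1 jk.2 i3) =
          Zᵀ * Matrix.of (fun q (jk : Fin I1 × Fin I2) => ∑ p, X jk.1 p * Y jk.2 p q) := by
        ext i3 jk
        simp only [Matrix.of_apply, Matrix.mul_apply, hA, Matrix.transpose_apply, Finset.mul_sum]
        rw [Finset.sum_comm]
        congr 1; ext p; congr 1; ext q; ring
      rw [heq]
      exact (Matrix.rank_mul_le_left _ _).trans (Matrix.rank_le_card_width Zᵀ |>.trans (by simp))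
  · rintro ⟨h1, h3⟩
    obtain ⟨X, B1, W, hXB, hWB⟩ := exists_rank_factorization _ h1
    -- B1 : Matrix (Fin r1) (Fin I2 × Fin I3), rows span row space of A₍₁₎
    -- mode-3 unfolding of B1 as tensor
    set B3 : Matrix (Fin I3) (Fin r1 × Fin I2) ℝ :=
      Matrix.of (fun i3 (pj : Fin r1 × Fin I2) => B1 pj.1 (pj.2, i3)) with hB3
    have hB3rank : B3.rank ≤ r2 := by
      have heq : B3 = (Matrix.of fun (i3 : Fin I3) (jk : Fin I1 × Fin I2) => A jk.1 jk.2 i3) *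
          Matrix.of (fun (jk : Fin I1 × Fin I2) (pj : Fin r1 × Fin I2) =>
            if jk.2 = pj.2 then W pj.1 jk.1 else 0) := by
        ext i3 pj
        simp only [hB3, Matrix.of_apply, Matrix.mul_apply, Fintype.sum_prod_type]
        have hW1 : B1 pj.1 (pj.2, i3) = ∑ i1, W pj.1 i1 * A i1 pj.2 i3 := by
          have := congrFun (congrFun hWB pj.1) (pj.2, i3)
          simpa [Matrix.mul_apply] using this
        rw [hW1]
        refine Finset.sum_congr rfl fun i1 _ => ?_
        simp only [mul_ite, mul_zero]
        rw [Finset.sum_ite_eq' Finset.univ pj.2 (fun b => A i1 b i3 * W pj.1 i1)]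
        simp [mul_comm]
      rw [heq]
      exact (Matrix.rank_mul_le_left _ _).trans h3
    obtain ⟨Z', C, _, hZC, _⟩ := exists_rank_factorization B3 hB3rank
    refine ⟨X, fun i2 => Matrix.of (fun p q => C q (p, i2)), Matrix.of (fun q i3 => Z' i3 q), ?_⟩
    intro i1 i2 i3
    have hA1 : A i1 i2 i3 = ∑ p, X i1 p * B1 p (i2, i3) := by
      have := congrFun (congrFun hXB i1) (i2, i3)
      simpa [Matrix.mul_apply] using this
    have hB1 : ∀ p, B1 p (i2, i3) = ∑ q, Z' i3 q * C q (p, i2) := by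
      intro p
      have := congrFun (congrFun hZC i3) (p, i2)
      simpa [Matrix.mul_apply, hB3] using this
    rw [hA1]
    refine Finset.sum_congr rfl fun p _ => ?_
    rw [hB1, Finset.mul_sum]
    refine Finset.sum_congr rfl fun q _ => ?_
    simp only [Matrix.of_apply]
    ring
end

section
/- Let A ∈ ℝ^{I1×I2×I3} be a third-order real tensor and let r1, r2 be positive integers. There exist vectors x_{i3} ∈ ℝ^{r1} for each i3 ∈ {1,…,I3}, matrices Y_{i1} ∈ ℝ^{r1×r2} for each i1 ∈ {1,…,I1}, and vectors z_{i2} ∈ ℝ^{r2} for each i2 ∈ {1,…,I2} such that A(i1,i2,i3) = x_{i3}ᵀ Y_{i1} z_{i2} = ∑_{p=1}^{r1} ∑_{q=1}^{r2} x_{i3}(p) · Y_{i1}(p,q) · z_{i2}(q) for all indices (i1,i2,i3) if and only if rank(A_{(3)}) ≤ r1 and rank(A_{(2)}) ≤ r2. -/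
open Matrix

lemma tt_exists_factorization {m n : Type*} [Fintype m] [Fintype n]
    (M : Matrix m n ℝ) (r : ℕ) (h : M.rank ≤ r) :
    ∃ (C : Matrix m (Fin r) ℝ) (R : Matrix (Fin r) n ℝ),
      M = C * R ∧ ∀ p, Cᵀ p ∈ Submodule.span ℝ (Set.range Mᵀ) := by
  classical
  set W := Submodule.span ℝ (Set.range Mᵀ) with hW
  have hd : Module.finrank ℝ W ≤ r := by
    exact M.rank_eq_finrank_span_cols.symm.le.trans h
  set d := Module.finrank ℝ W with hdd
  let b : Module.Basis (Fin d) ℝ W := Module.finBasis ℝ W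
  have hmem : ∀ j, Mᵀ j ∈ W := fun j => Submodule.subset_span ⟨j, rfl⟩
  let v : n → W := fun j => ⟨Mᵀ j, hmem j⟩
  let C : Matrix m (Fin r) ℝ :=
    Matrix.of fun i (p : Fin r) => if hp : (p : ℕ) < d then ((b ⟨p, hp⟩ : W) : m → ℝ) i else 0
  let R : Matrix (Fin r) n ℝ :=
    Matrix.of fun (p : Fin r) j => if hp : (p : ℕ) < d then b.repr (v j) ⟨p, hp⟩ else 0
  refine ⟨C, R, ?_, ?_⟩
  · ext i j
    rw [Matrix.mul_apply]
    set f : ℕ → ℝ := fun k =>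
      if hk : k < d then ((b ⟨k, hk⟩ : W) : m → ℝ) i * b.repr (v j) ⟨k, hk⟩ else 0 with hf
    have h1 : ∑ p : Fin r, C i p * R p j = ∑ k ∈ Finset.range r, f k := by
      rw [← Fin.sum_univ_eq_sum_range]
      refine Finset.sum_congr rfl fun p _ => ?_
      by_cases hp : (p : ℕ) < d
      · simp [C, R, hf, hp]
      · simp [C, R, hf, hp]
    have h2 : ∑ k ∈ Finset.range d, f k = ∑ k ∈ Finset.range r, f k := by
      refine Finset.sum_subset (Finset.range_subset_range.2 hd) fun k _ hk => ?_
      have : ¬ k < d := by simpa using hk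
      simp [hf, this]
    have h3 : ∑ k ∈ Finset.range d, f k
        = ∑ p : Fin d, ((b p : W) : m → ℝ) i * b.repr (v j) p := by
      rw [← Fin.sum_univ_eq_sum_range]
      refine Finset.sum_congr rfl fun p _ => ?_
      simp [hf, p.isLt]
    have h4 := congrArg (fun w : W => (w : m → ℝ) i) (b.sum_repr (v j))
    have h5 : ((∑ p : Fin d, b.repr (v j) p • b p : W) : m → ℝ) i
        = ∑ p : Fin d, b.repr (v j) p * ((b p : W) : m → ℝ) i := by
      push_cast
      simp [Finset.sum_apply]
    have h6 : M i j = ∑ p : Fin d, b.repr (v j) p * ((b p : W) : m → ℝ) i := by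
      rw [← h5, h4]; rfl
    rw [h1, ← h2, h3, h6]
    exact Finset.sum_congr rfl fun p _ => mul_comm _ _
  · intro p
    by_cases hp : (p : ℕ) < d
    · have hC : Cᵀ p = ((b ⟨p, hp⟩ : W) : m → ℝ) := by
        funext i; simp [C, Matrix.transpose_apply, hp]
      rw [hC]
      exact (b ⟨p, hp⟩).2
    · have hC : Cᵀ p = (0 : m → ℝ) := by
        funext i; simp [C, Matrix.transpose_apply, hp]
      rw [hC]
      exact W.zero_mem

lemma tt_rank_le_of_cols_mem_span {m n n' : Type*} [Fintype m] [Fintype n] [Fintype n']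
    (M : Matrix m n ℝ) (N : Matrix m n' ℝ)
    (h : ∀ j, Nᵀ j ∈ Submodule.span ℝ (Set.range Mᵀ)) : N.rank ≤ M.rank := by
  rw [M.rank_eq_finrank_span_cols, N.rank_eq_finrank_span_cols]
  have hle : Submodule.span ℝ (Set.range Nᵀ) ≤ Submodule.span ℝ (Set.range Mᵀ) := by
    rw [Submodule.span_le]
    rintro x ⟨j, rfl⟩
    exact h j
  exact Submodule.finrank_mono hle

/-- A third-order tensor `A ∈ ℝ^{I1×I2×I3}` admits a mode-1 tensor train factorization
`A(i1,i2,i3) = ∑_{p,q} x_{i3}(p) · Y_{i1}(p,q) · z_{i2}(q)` with ranks `(r1, r2)` if and only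
if the mode-3 unfolding has rank at most `r1` and the mode-2 unfolding has rank at most `r2`. -/
theorem mode1_TT_factorization_iff_rank {I1 I2 I3 r1 r2 : ℕ}
    (hr1 : 0 < r1) (hr2 : 0 < r2)
    (A : Fin I1 → Fin I2 → Fin I3 → ℝ) :
    (∃ (x : Fin I3 → Fin r1 → ℝ) (Y : Fin I1 → Matrix (Fin r1) (Fin r2) ℝ)
        (z : Fin I2 → Fin r2 → ℝ),
        ∀ i1 i2 i3, A i1 i2 i3 = ∑ p, ∑ q, x i3 p * Y i1 p q * z i2 q) ↔
      (Matrix.rank (Matrix.of fun (i3 : Fin I3) (jk : Fin I1 × Fin I2) => A jk.1 jk.2 i3) ≤ r1 ∧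
       Matrix.rank (Matrix.of fun (i2 : Fin I2) (jk : Fin I1 × Fin I3) => A jk.1 i2 jk.2) ≤ r2) := by
  set M3 : Matrix (Fin I3) (Fin I1 × Fin I2) ℝ :=
    Matrix.of fun (i3 : Fin I3) (jk : Fin I1 × Fin I2) => A jk.1 jk.2 i3 with hM3
  set M2 : Matrix (Fin I2) (Fin I1 × Fin I3) ℝ :=
    Matrix.of fun (i2 : Fin I2) (jk : Fin I1 × Fin I3) => A jk.1 i2 jk.2 with hM2
  constructor
  · rintro ⟨x, Y, z, hA⟩
    constructor
    · -- M3 = X * B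
      have hfac : M3 = (Matrix.of fun i3 (p : Fin r1) => x i3 p) *
          (Matrix.of fun (p : Fin r1) (jk : Fin I1 × Fin I2) => ∑ q, Y jk.1 p q * z jk.2 q) := by
        ext i3 jk
        rw [Matrix.mul_apply]
        simp only [Matrix.of_apply, hM3]
        rw [hA jk.1 jk.2 i3]
        refine Finset.sum_congr rfl fun p _ => ?_
        rw [Finset.mul_sum]
        exact Finset.sum_congr rfl fun q _ => by ring
      calc M3.rank ≤ (Matrix.of fun i3 (p : Fin r1) => x i3 p).rank :=
            hfac ▸ Matrix.rank_mul_le_left _ _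
        _ ≤ r1 := (Matrix.rank_le_card_width _).trans (Fintype.card_fin r1).le
    · have hfac : M2 = (Matrix.of fun i2 (q : Fin r2) => z i2 q) *
          (Matrix.of fun (q : Fin r2) (jk : Fin I1 × Fin I3) => ∑ p, x jk.2 p * Y jk.1 p q) := by
        ext i2 jk
        rw [Matrix.mul_apply]
        simp only [Matrix.of_apply, hM2]
        rw [hA jk.1 i2 jk.2, Finset.sum_comm]
        refine Finset.sum_congr rfl fun q _ => ?_
        rw [Finset.mul_sum]
        exact Finset.sum_congr rfl fun p _ => by ring
      calc M2.rank ≤ (Matrix.of fun i2 (q : Fin r2) => z i2 q).rank :=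
            hfac ▸ Matrix.rank_mul_le_left _ _
        _ ≤ r2 := (Matrix.rank_le_card_width _).trans (Fintype.card_fin r2).le
  · rintro ⟨h3, h2⟩
    obtain ⟨C, R, hCR, hCspan⟩ := tt_exists_factorization (M2ᵀ) r2
      (by rw [Matrix.rank_transpose]; exact h2)
    rw [Matrix.transpose_transpose] at hCspan
    -- N i3 (i1, q) = C (i1, i3) q
    set N : Matrix (Fin I3) (Fin I1 × Fin r2) ℝ :=
      Matrix.of fun i3 (iq : Fin I1 × Fin r2) => C (iq.1, i3) iq.2 with hN
    have hNspan : ∀ jq : Fin I1 × Fin r2, Nᵀ jq ∈ Submodule.span ℝ (Set.range M3ᵀ) := by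
      rintro ⟨i1, q⟩
      set Φ : ((Fin I1 × Fin I3) → ℝ) →ₗ[ℝ] (Fin I3 → ℝ) :=
        LinearMap.funLeft ℝ ℝ (fun i3 => (i1, i3)) with hΦ
      have h0 : Cᵀ q ∈ Submodule.span ℝ (Set.range M2) := hCspan q
      have h1 : Φ (Cᵀ q) ∈ Submodule.map Φ (Submodule.span ℝ (Set.range M2)) :=
        Submodule.mem_map_of_mem h0
      rw [Submodule.map_span] at h1
      have h2' : Φ '' (Set.range M2) ⊆ Set.range M3ᵀ := by
        rintro _ ⟨_, ⟨i2, rfl⟩, rfl⟩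
        exact ⟨(i1, i2), rfl⟩
      have h3' : Submodule.span ℝ (Φ '' (Set.range M2)) ≤ Submodule.span ℝ (Set.range M3ᵀ) :=
        Submodule.span_mono h2'
      have h4 : Nᵀ (i1, q) = Φ (Cᵀ q) := rfl
      rw [h4]
      exact h3' h1
    have hNrank : N.rank ≤ r1 :=
      (tt_rank_le_of_cols_mem_span M3 N hNspan).trans h3
    obtain ⟨X, Yh, hXY, -⟩ := tt_exists_factorization N r1 hNrank
    refine ⟨fun i3 p => X i3 p, fun i1 => Matrix.of fun p q => Yh p (i1, q),
      fun i2 q => R q i2, fun i1 i2 i3 => ?_⟩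
    have hA2 : A i1 i2 i3 = ∑ q, C (i1, i3) q * R q i2 := by
      have : M2ᵀ (i1, i3) i2 = (C * R) (i1, i3) i2 := by rw [hCR]
      rw [Matrix.mul_apply] at this
      exact this
    have hC : ∀ q, C (i1, i3) q = ∑ p, X i3 p * Yh p (i1, q) := by
      intro q
      have : N i3 (i1, q) = (X * Yh) i3 (i1, q) := by rw [← hXY]
      rw [Matrix.mul_apply] at this
      exact this
    calc A i1 i2 i3 = ∑ q, C (i1, i3) q * R q i2 := hA2
      _ = ∑ q, ∑ p, X i3 p * Yh p (i1, q) * R q i2 := by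
          refine Finset.sum_congr rfl fun q _ => ?_
          rw [hC q, Finset.sum_mul]
      _ = ∑ p, ∑ q, X i3 p * Yh p (i1, q) * R q i2 := Finset.sum_comm
      _ = ∑ p, ∑ q, X i3 p * (Matrix.of fun p q => Yh p (i1, q)) p q * R q i2 := rfl
end

section
/- Let A ∈ ℝ^{I1×I2×I3} be a third-order real tensor and let r1, r2 be positive integers. There exist vectors x_{i2} ∈ ℝ^{r1} for each i2 ∈ {1,…,I2}, matrices Y_{i3} ∈ ℝ^{r1×r2} for each i3 ∈ {1,…,I3}, and vectors z_{i1} ∈ ℝ^{r2} for each i1 ∈ {1,…,I1} such that A(i1,i2,i3) = x_{i2}ᵀ Y_{i3} z_{i1} = ∑_{p=1}^{r1} ∑_{q=1}^{r2} x_{i2}(p) · Y_{i3}(p,q) · z_{i1}(q) for all indices (i1,i2,i3) if and only if rank(A_{(2)}) ≤ r1 and rank(A_{(1)}) ≤ r2. -/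
open Matrix Finset

lemma exists_fact {m n : Type*} [Fintype m] [Fintype n] (M : Matrix m n ℝ) (r : ℕ)
    (h : M.rank ≤ r) :
    ∃ (Z : Matrix m (Fin r) ℝ) (P : Matrix (Fin r) m ℝ),
      ∀ i j, M i j = ∑ k, ∑ i', Z i k * P k i' * M i' j := by
  classical
  set S : Submodule ℝ (n → ℝ) := Submodule.span ℝ (Set.range M) with hS
  have hrank : M.rank = Module.finrank ℝ S := by
    rw [← M.rank_transpose, Matrix.rank_eq_finrank_span_cols]; rfl
  have hd : Module.finrank ℝ S ≤ r := hrank ▸ h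
  set d := Module.finrank ℝ S with hdd
  let b : Module.Basis (Fin d) ℝ S := Module.finBasis ℝ S
  have hmem : ∀ i, M i ∈ S := fun i => Submodule.subset_span ⟨i, rfl⟩
  let Z0 : m → Fin d → ℝ := fun i k => b.repr ⟨M i, hmem i⟩ k
  have hb : ∀ k : Fin d, ∃ c : m → ℝ, ∑ i', c i' • M i' = (b k : n → ℝ) := by
    intro k
    have : (b k : n → ℝ) ∈ Submodule.span ℝ (Set.range M) := (b k).2
    exact (Submodule.mem_span_range_iff_exists_fun _).1 this
  choose P0 hP0 using hb
  have key : ∀ i j, M i j = ∑ k : Fin d, ∑ i', Z0 i k * P0 k i' * M i' j := by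
    intro i j
    have h1 : (⟨M i, hmem i⟩ : S) = ∑ k : Fin d, b.repr ⟨M i, hmem i⟩ k • b k :=
      (b.sum_repr ⟨M i, hmem i⟩).symm
    have h2 : M i = ∑ k : Fin d, Z0 i k • (b k : n → ℝ) := by
      have := congrArg (Subtype.val) h1
      simp only [Submodule.coe_sum, Submodule.coe_smul] at this; exact this
    calc M i j = (∑ k : Fin d, Z0 i k • (b k : n → ℝ)) j := by rw [← h2]
      _ = ∑ k : Fin d, Z0 i k * (b k : n → ℝ) j := by simp
      _ = ∑ k : Fin d, Z0 i k * (∑ i', P0 k i' • M i') j := by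
          simp_rw [hP0]
      _ = ∑ k : Fin d, ∑ i', Z0 i k * P0 k i' * M i' j := by
          simp [Finset.mul_sum, mul_assoc]
  -- pad from Fin d to Fin r
  refine ⟨fun i k => if hk : (k : ℕ) < d then Z0 i ⟨k, hk⟩ else 0,
          fun k i' => if hk : (k : ℕ) < d then P0 ⟨k, hk⟩ i' else 0, fun i j => ?_⟩
  rw [key i j]
  set g : ℕ → ℝ := fun k =>
    if hk : k < d then ∑ i', Z0 i ⟨k, hk⟩ * P0 ⟨k, hk⟩ i' * M i' j else 0 with hg
  have hR : ∀ k : Fin r,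
      (∑ i', (if hk : (k : ℕ) < d then Z0 i ⟨k, hk⟩ else 0) *
        (if hk : (k : ℕ) < d then P0 ⟨k, hk⟩ i' else 0) * M i' j) = g (k : ℕ) := by
    intro k
    by_cases hk : (k : ℕ) < d
    · simp [hg, hk]
    · simp [hg, hk]
  have hL : ∀ k : Fin d, (∑ i', Z0 i k * P0 k i' * M i' j) = g (k : ℕ) := by
    intro k
    simp [hg, k.isLt]
  simp_rw [hL, hR]
  rw [Fin.sum_univ_eq_sum_range g d, Fin.sum_univ_eq_sum_range g r]
  refine Finset.sum_subset (Finset.range_subset_range.2 hd) fun k _ hk => ?_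
  simp only [Finset.mem_range, not_lt] at hk
  simp [hg, Nat.not_lt.2 hk]


/-- A third-order tensor `A ∈ ℝ^{I1×I2×I3}` admits a mode-3 tensor train factorization
`A(i1,i2,i3) = ∑_{p,q} x_{i2}(p) · Y_{i3}(p,q) · z_{i1}(q)` with ranks `(r1, r2)` if and only
if the mode-2 unfolding has rank at most `r1` and the mode-1 unfolding has rank at most `r2`. -/
theorem mode3_TT_factorization_iff_rank {I1 I2 I3 r1 r2 : ℕ}
    (hr1 : 0 < r1) (hr2 : 0 < r2)
    (A : Fin I1 → Fin I2 → Fin I3 → ℝ) :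
    (∃ (x : Fin I2 → Fin r1 → ℝ) (Y : Fin I3 → Matrix (Fin r1) (Fin r2) ℝ)
        (z : Fin I1 → Fin r2 → ℝ),
        ∀ i1 i2 i3, A i1 i2 i3 = ∑ p, ∑ q, x i2 p * Y i3 p q * z i1 q) ↔
      (Matrix.rank (Matrix.of fun (i2 : Fin I2) (jk : Fin I1 × Fin I3) => A jk.1 i2 jk.2) ≤ r1 ∧
       Matrix.rank (Matrix.of fun (i1 : Fin I1) (jk : Fin I2 × Fin I3) => A i1 jk.1 jk.2) ≤ r2) := by
  constructor
  · rintro ⟨x, Y, z, hA⟩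
    constructor
    · -- mode-2 unfolding factors through Fin r1
      have hfac : (Matrix.of fun (i2 : Fin I2) (jk : Fin I1 × Fin I3) => A jk.1 i2 jk.2) =
          (Matrix.of fun (i2 : Fin I2) (p : Fin r1) => x i2 p) *
          (Matrix.of fun (p : Fin r1) (jk : Fin I1 × Fin I3) =>
            ∑ q, Y jk.2 p q * z jk.1 q) := by
        ext i2 jk
        simp [Matrix.mul_apply, hA, Finset.mul_sum, mul_assoc]
      rw [hfac]
      calc _ ≤ Matrix.rank (Matrix.of fun (p : Fin r1) (jk : Fin I1 × Fin I3) =>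
            ∑ q, Y jk.2 p q * z jk.1 q) := Matrix.rank_mul_le_right _ _
        _ ≤ Fintype.card (Fin r1) := Matrix.rank_le_card_height _
        _ = r1 := Fintype.card_fin _
    · have hfac : (Matrix.of fun (i1 : Fin I1) (jk : Fin I2 × Fin I3) => A i1 jk.1 jk.2) =
          (Matrix.of fun (i1 : Fin I1) (q : Fin r2) => z i1 q) *
          (Matrix.of fun (q : Fin r2) (jk : Fin I2 × Fin I3) =>
            ∑ p, x jk.1 p * Y jk.2 p q) := by
        ext i1 jk
        simp only [Matrix.of_apply, Matrix.mul_apply]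
        rw [hA, Finset.sum_comm]
        simp only [Matrix.of_apply, Finset.mul_sum]
        exact Finset.sum_congr rfl fun q _ => Finset.sum_congr rfl fun p _ => by ring
      rw [hfac]
      calc _ ≤ Matrix.rank (Matrix.of fun (q : Fin r2) (jk : Fin I2 × Fin I3) =>
            ∑ p, x jk.1 p * Y jk.2 p q) := Matrix.rank_mul_le_right _ _
        _ ≤ Fintype.card (Fin r2) := Matrix.rank_le_card_height _
        _ = r2 := Fintype.card_fin _
  · rintro ⟨h2, h1⟩
    classical
    -- factor the mode-1 unfolding
    obtain ⟨Z, P, hZP⟩ := exists_fact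
      (Matrix.of fun (i1 : Fin I1) (jk : Fin I2 × Fin I3) => A i1 jk.1 jk.2) r2 h1
    -- W q i2 i3 : the "compressed" tensor
    set N : Matrix (Fin I2) (Fin r2 × Fin I3) ℝ :=
      Matrix.of fun i2 qk => ∑ i', P qk.1 i' * A i' i2 qk.2 with hN
    have hAN : ∀ i1 i2 i3, A i1 i2 i3 = ∑ q, Z i1 q * N i2 (q, i3) := by
      intro i1 i2 i3
      have := hZP i1 (i2, i3)
      simp only [Matrix.of_apply] at this ⊢
      rw [this, hN]
      simp [Finset.mul_sum, mul_assoc]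
    -- N has rank ≤ r1
    have hNrank : N.rank ≤ r1 := by
      have hfac : N = (Matrix.of fun (i2 : Fin I2) (jk : Fin I1 × Fin I3) => A jk.1 i2 jk.2) *
          (Matrix.of fun (jk : Fin I1 × Fin I3) (qk : Fin r2 × Fin I3) =>
            if jk.2 = qk.2 then P qk.1 jk.1 else 0) := by
        ext i2 qk
        rw [hN]
        simp only [Matrix.of_apply, Matrix.mul_apply, Fintype.sum_prod_type, mul_ite,
          mul_zero, Finset.sum_ite_eq', Finset.mem_univ, if_true]
        exact Finset.sum_congr rfl fun i' _ => mul_comm _ _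
      rw [hfac]
      exact le_trans (Matrix.rank_mul_le_left _ _) h2
    obtain ⟨X, Q, hXQ⟩ := exists_fact N r1 hNrank
    refine ⟨fun i2 p => X i2 p,
      fun i3 => Matrix.of fun p q => ∑ i2', Q p i2' * N i2' (q, i3),
      fun i1 q => Z i1 q, fun i1 i2 i3 => ?_⟩
    rw [hAN i1 i2 i3]
    have hNfac : ∀ q, N i2 (q, i3) = ∑ p, X i2 p * ∑ i2', Q p i2' * N i2' (q, i3) := by
      intro q
      rw [hXQ i2 (q, i3)]
      simp [Finset.mul_sum, mul_assoc]
    simp_rw [hNfac]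
    rw [Finset.sum_comm]
    refine Finset.sum_congr rfl fun p _ => ?_
    rw [Finset.mul_sum]
    refine Finset.sum_congr rfl fun q _ => ?_
    simp only [Matrix.of_apply]
    ring
end
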